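/- arXiv:cs/0507033 — 3 statements merged into one kernel-verified Lean document; each statement's English description precedes it below -/
import Mathlib

section
/- Let K : P_0^D → ℝ be defined by downward recursion on levels: K_T := k(μ_T, μ'_T) for T ∈ P_D, and K_T := (1 − ε_T)·k(μ_T, μ'_T) + ε_T·∏_{U ∈ s(T)} K_U for T ∈ P_d with d < D. Then the multiresolution kernel value factorizes as ∑_{P ∈ 𝒫_D} π(P) · ∏_{T ∈ P} k(μ_T, μ'_T) = K_𝒯. -/
open Finset

/-- `P` is a partition of the finite type `𝒯`: its blocks are nonempty and every
element of `𝒯` belongs to exactly one block. -/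
def IsPartitionOn {𝒯 : Type*} [Fintype 𝒯] [DecidableEq 𝒯] (P : Finset (Finset 𝒯)) : Prop :=
  (∀ T ∈ P, T.Nonempty) ∧ ∀ t : 𝒯, ∃! T, T ∈ P ∧ t ∈ T

/-- A hierarchy of depth `D` on the finite type `𝒯`: a sequence of partitions
`P_0, ..., P_D` of `𝒯` such that `P_0 = {𝒯}`, `P_D = {{t} : t ∈ 𝒯}`, and for each
`d < D` and each block `T ∈ P_d`, the set `s(T)` of blocks of `P_{d+1}` included in `T`
is a partition of `T` different from `{T}`. -/
structure Hierarchy (𝒯 : Type*) [Fintype 𝒯] [DecidableEq 𝒯] (D : ℕ) where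
  part : ℕ → Finset (Finset 𝒯)
  isPartition : ∀ d ≤ D, IsPartitionOn (part d)
  part_zero : part 0 = {(Finset.univ : Finset 𝒯)}
  part_last : part D = Finset.univ.image fun t : 𝒯 => ({t} : Finset 𝒯)
  sibling_cover : ∀ d < D, ∀ T ∈ part d, ∀ t ∈ T, ∃ U ∈ part (d + 1), U ⊆ T ∧ t ∈ U
  sibling_ne : ∀ d < D, ∀ T ∈ part d, (part (d + 1)).filter (· ⊆ T) ≠ {T}

namespace Hierarchy

variable {𝒯 : Type*} [Fintype 𝒯] [DecidableEq 𝒯] {D : ℕ}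

/-- The siblings `s(T)` of a block `T ∈ P_d`: the blocks of `P_{d+1}` included in `T`. -/
def siblings (H : Hierarchy 𝒯 D) (d : ℕ) (T : Finset 𝒯) : Finset (Finset 𝒯) :=
  (H.part (d + 1)).filter (· ⊆ T)

/-- The family `P_0^D = ⋃_{d=0}^D P_d` of all sets appearing in the hierarchy. -/
def levels (H : Hierarchy 𝒯 D) : Finset (Finset 𝒯) :=
  (Finset.range (D + 1)).biUnion H.part

open Classical in
/-- The collection `𝒫_D` of all partitions of `𝒯` whose blocks all belong to `P_0^D`. -/
noncomputable def parts (H : Hierarchy 𝒯 D) : Finset (Finset (Finset 𝒯)) :=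
  H.levels.powerset.filter IsPartitionOn

open Classical in
/-- The ancestors `P° = {T ∈ P_0^D : ∃ V ∈ P, V ⊊ T}` of a partition `P`. -/
noncomputable def ancestors (H : Hierarchy 𝒯 D) (P : Finset (Finset 𝒯)) :
    Finset (Finset 𝒯) :=
  H.levels.filter fun T => ∃ V ∈ P, V ⊂ T

/-- The branching-process weight `π(P) = ∏_{T ∈ P} (1 - ε_T) · ∏_{T ∈ P°} ε_T`. -/
noncomputable def weight (H : Hierarchy 𝒯 D) (ε : Finset 𝒯 → ℝ)
    (P : Finset (Finset 𝒯)) : ℝ :=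
  (∏ T ∈ P, (1 - ε T)) * ∏ T ∈ H.ancestors P, ε T

end Hierarchy
namespace Hierarchy

variable {𝒯 : Type*} [Fintype 𝒯] [DecidableEq 𝒯] {D : ℕ}

lemma block_unique (H : Hierarchy 𝒯 D) {d : ℕ} (hd : d ≤ D) {V W : Finset 𝒯}
    (hV : V ∈ H.part d) (hW : W ∈ H.part d) {t : 𝒯} (htV : t ∈ V) (htW : t ∈ W) : V = W := by
  obtain ⟨-, h⟩ := H.isPartition d hd
  obtain ⟨U, -, hU⟩ := h t
  rw [hU V ⟨hV, htV⟩, hU W ⟨hW, htW⟩]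

lemma exists_block (H : Hierarchy 𝒯 D) {d : ℕ} (hd : d ≤ D) (t : 𝒯) :
    ∃ V ∈ H.part d, t ∈ V := by
  obtain ⟨-, h⟩ := H.isPartition d hd
  obtain ⟨U, ⟨hU, htU⟩, -⟩ := h t
  exact ⟨U, hU, htU⟩

lemma nonempty_of_mem_part (H : Hierarchy 𝒯 D) {d : ℕ} (hd : d ≤ D) {V : Finset 𝒯}
    (hV : V ∈ H.part d) : V.Nonempty := (H.isPartition d hd).1 V hV

lemma nested (H : Hierarchy 𝒯 D) {a b : ℕ} (hab : a ≤ b) (hbD : b ≤ D)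
    {V W : Finset 𝒯} (hV : V ∈ H.part b) (hW : W ∈ H.part a) {t : 𝒯}
    (htV : t ∈ V) (htW : t ∈ W) : V ⊆ W := by
  induction b, hab using Nat.le_induction generalizing V t with
  | base => exact (H.block_unique hbD hV hW htV htW).le
  | succ b hab ih =>
    obtain ⟨V', hV', htV'⟩ := H.exists_block (show b ≤ D by omega) t
    obtain ⟨U, hU, hUV', htU⟩ := H.sibling_cover b (by omega) V' hV' t htV'
    have hUV : U = V := H.block_unique hbD hU hV htU htV
    exact (hUV ▸ hUV').trans (ih (by omega) hV' htV' htW)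

lemma notMem_succ (H : Hierarchy 𝒯 D) {d : ℕ} (hd : d < D) {T : Finset 𝒯}
    (hT : T ∈ H.part d) : T ∉ H.part (d + 1) := by
  intro hT'
  apply H.sibling_ne d hd T hT
  ext U
  simp only [Finset.mem_filter, Finset.mem_singleton]
  constructor
  · rintro ⟨hU, hUT⟩
    obtain ⟨t, ht⟩ := H.nonempty_of_mem_part (by omega) hU
    exact H.block_unique (by omega) hU hT' ht (hUT ht)
  · rintro rfl; exact ⟨hT', le_refl _⟩

lemma mem_siblings {H : Hierarchy 𝒯 D} {d : ℕ} {T U : Finset 𝒯} :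
    U ∈ H.siblings d T ↔ U ∈ H.part (d + 1) ∧ U ⊆ T := by
  simp [siblings, Finset.mem_filter]

lemma siblings_ssubset (H : Hierarchy 𝒯 D) {d : ℕ} (hd : d < D) {T U : Finset 𝒯}
    (hT : T ∈ H.part d) (hU : U ∈ H.siblings d T) : U ⊂ T := by
  obtain ⟨hU1, hU2⟩ := mem_siblings.1 hU
  refine ssubset_of_subset_of_ne hU2 fun h => ?_
  exact H.notMem_succ hd hT (h ▸ hU1)

/-- The blocks of the hierarchy at levels `d, d+1, ..., D`. -/
def levelsGe (H : Hierarchy 𝒯 D) (d : ℕ) : Finset (Finset 𝒯) :=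
  (Finset.Icc d D).biUnion H.part

lemma mem_levelsGe {H : Hierarchy 𝒯 D} {d : ℕ} {V : Finset 𝒯} :
    V ∈ H.levelsGe d ↔ ∃ e, d ≤ e ∧ e ≤ D ∧ V ∈ H.part e := by
  simp [levelsGe, Finset.mem_biUnion, Finset.mem_Icc, and_assoc]

lemma mem_levels {H : Hierarchy 𝒯 D} {V : Finset 𝒯} :
    V ∈ H.levels ↔ ∃ e, e ≤ D ∧ V ∈ H.part e := by
  simp only [levels, Finset.mem_biUnion, Finset.mem_range, Nat.lt_succ_iff]

lemma levelsGe_subset_levels (H : Hierarchy 𝒯 D) (d : ℕ) : H.levelsGe d ⊆ H.levels := by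
  intro V hV
  obtain ⟨e, -, heD, hVe⟩ := mem_levelsGe.1 hV
  exact mem_levels.2 ⟨e, heD, hVe⟩

lemma nonempty_of_mem_levelsGe (H : Hierarchy 𝒯 D) {d : ℕ} {V : Finset 𝒯}
    (hV : V ∈ H.levelsGe d) : V.Nonempty := by
  obtain ⟨e, -, heD, hVe⟩ := mem_levelsGe.1 hV
  exact H.nonempty_of_mem_part heD hVe

open Classical in
/-- Partitions of `T` into hierarchy blocks at levels `≥ d`. -/
noncomputable def partsOn (H : Hierarchy 𝒯 D) (d : ℕ) (T : Finset 𝒯) :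
    Finset (Finset (Finset 𝒯)) :=
  (H.levelsGe d).powerset.filter fun P =>
    (∀ V ∈ P, V ⊆ T) ∧ ∀ t ∈ T, ∃! V, V ∈ P ∧ t ∈ V

lemma mem_partsOn {H : Hierarchy 𝒯 D} {d : ℕ} {T : Finset 𝒯} {P : Finset (Finset 𝒯)} :
    P ∈ H.partsOn d T ↔ P ⊆ H.levelsGe d ∧ (∀ V ∈ P, V ⊆ T) ∧
      ∀ t ∈ T, ∃! V, V ∈ P ∧ t ∈ V := by
  classical
  simp [partsOn, Finset.mem_filter, Finset.mem_powerset, and_assoc]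

open Classical in
/-- Ancestors of `P` inside `T`. -/
noncomputable def ancOn (H : Hierarchy 𝒯 D) (T : Finset 𝒯) (P : Finset (Finset 𝒯)) :
    Finset (Finset 𝒯) :=
  H.levels.filter fun W => W ⊆ T ∧ ∃ V ∈ P, V ⊂ W

lemma mem_ancOn {H : Hierarchy 𝒯 D} {T W : Finset 𝒯} {P : Finset (Finset 𝒯)} :
    W ∈ H.ancOn T P ↔ W ∈ H.levels ∧ W ⊆ T ∧ ∃ V ∈ P, V ⊂ W := by
  classical
  simp [ancOn, Finset.mem_filter]

/-- Localized weight. -/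
noncomputable def wOn (H : Hierarchy 𝒯 D) (ε : Finset 𝒯 → ℝ) (T : Finset 𝒯)
    (P : Finset (Finset 𝒯)) : ℝ :=
  (∏ V ∈ P, (1 - ε V)) * ∏ W ∈ H.ancOn T P, ε W

lemma ancOn_singleton (H : Hierarchy 𝒯 D) (T : Finset 𝒯) : H.ancOn T {T} = ∅ := by
  ext W
  simp only [mem_ancOn, Finset.notMem_empty, iff_false]
  intro h
  obtain ⟨-, hWT, V, hV, hVW⟩ := h
  rw [Finset.mem_singleton] at hV
  subst hV
  exact lt_irrefl _ (lt_of_lt_of_le hVW hWT)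

lemma key (H : Hierarchy 𝒯 D) (ε k' K : Finset 𝒯 → ℝ)
    (hεD : ∀ T ∈ H.part D, ε T = 0)
    (hK_last : ∀ T ∈ H.part D, K T = k' T)
    (hK_rec : ∀ d < D, ∀ T ∈ H.part d,
      K T = (1 - ε T) * k' T + ε T * ∏ U ∈ H.siblings d T, K U) :
    ∀ n d, d + n = D → ∀ T ∈ H.part d,
      ∑ P ∈ H.partsOn d T, H.wOn ε T P * ∏ V ∈ P, k' V = K T := by
  intro n
  induction n with
  | zero =>
    intro d hd T hT
    obtain rfl : d = D := by omega
    have hsingle : H.partsOn d T = {{T}} := by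
      ext P
      rw [Finset.mem_singleton, mem_partsOn]
      constructor
      · rintro ⟨hsub, hsubT, huniq⟩
        obtain ⟨t₀, ht₀⟩ := H.nonempty_of_mem_part le_rfl hT
        obtain ⟨V, ⟨hVP, htV⟩, -⟩ := huniq t₀ ht₀
        have hVD : V ∈ H.part d := by
          obtain ⟨e, he1, he2, hVe⟩ := mem_levelsGe.1 (hsub hVP)
          obtain rfl : e = d := by omega
          exact hVe
        have hVT : V = T := H.block_unique le_rfl hVD hT htV (hsubT V hVP htV)
        subst hVT
        apply Finset.eq_singleton_iff_unique_mem.2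
        refine ⟨hVP, fun W hW => ?_⟩
        obtain ⟨s₀, hs₀⟩ := H.nonempty_of_mem_levelsGe (hsub hW)
        obtain ⟨V', -, hu⟩ := huniq s₀ (hsubT W hW hs₀)
        rw [hu W ⟨hW, hs₀⟩, ← hu V ⟨hVP, hsubT W hW hs₀⟩]
      · rintro rfl
        refine ⟨?_, ?_, ?_⟩
        · intro V hV
          rw [Finset.mem_singleton] at hV
          subst hV
          exact mem_levelsGe.2 ⟨d, le_rfl, le_rfl, hT⟩
        · intro V hV
          rw [Finset.mem_singleton] at hV
          subst hV
          exact subset_rfl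
        · intro t ht
          exact ⟨T, ⟨Finset.mem_singleton_self T, ht⟩,
            fun V hV => Finset.mem_singleton.1 hV.1⟩
    rw [hsingle, Finset.sum_singleton, wOn, ancOn_singleton, Finset.prod_empty,
      Finset.prod_singleton, Finset.prod_singleton, hεD T hT, hK_last T hT]
    ring
  | succ n ih =>
    intro d hdn T hT
    have hdD : d < D := by omega
    have hd1D : d + 1 ≤ D := hdD
    have hTne : T.Nonempty := H.nonempty_of_mem_part (by omega) hT
    have hTmemP : ({T} : Finset (Finset 𝒯)) ∈ H.partsOn d T := by
      rw [mem_partsOn]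
      refine ⟨?_, ?_, ?_⟩
      · intro V hV
        rw [Finset.mem_singleton] at hV
        subst hV
        exact mem_levelsGe.2 ⟨d, le_rfl, by omega, hT⟩
      · intro V hV
        rw [Finset.mem_singleton] at hV
        subst hV
        exact subset_rfl
      · intro t ht
        exact ⟨T, ⟨Finset.mem_singleton_self T, ht⟩,
          fun V hV => Finset.mem_singleton.1 hV.1⟩
    -- every block of the hierarchy inside T at level ≥ d+1 lies in a sibling
    have hsub_sib : ∀ {V : Finset 𝒯}, V ∈ H.levelsGe (d + 1) → V ⊆ T →
        ∃ U ∈ H.siblings d T, V ⊆ U := by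
      intro V hV hVT
      obtain ⟨t, ht⟩ := H.nonempty_of_mem_levelsGe hV
      obtain ⟨U, hU, htU⟩ := H.exists_block hd1D t
      obtain ⟨e, hde, heD, hVe⟩ := mem_levelsGe.1 hV
      have hVU : V ⊆ U := H.nested hde heD hVe hU ht htU
      have hUT : U ⊆ T := H.nested (Nat.le_succ d) hd1D hU hT htU (hVT ht)
      exact ⟨U, mem_siblings.2 ⟨hU, hUT⟩, hVU⟩
    -- structure of partitions other than {T}
    have herase : ∀ P ∈ (H.partsOn d T).erase {T}, T ∉ P ∧ P ⊆ H.levelsGe (d + 1) ∧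
        (∀ V ∈ P, V ⊆ T) ∧ (∀ t ∈ T, ∃! V, V ∈ P ∧ t ∈ V) := by
      intro P hP
      obtain ⟨hPne, hPmem⟩ := Finset.mem_erase.1 hP
      obtain ⟨hsub, hsubT, huniq⟩ := mem_partsOn.1 hPmem
      have hTP : T ∉ P := by
        intro hTP
        apply hPne
        apply Finset.eq_singleton_iff_unique_mem.2
        refine ⟨hTP, fun W hW => ?_⟩
        obtain ⟨s₀, hs₀⟩ := H.nonempty_of_mem_levelsGe (hsub hW)
        obtain ⟨V', -, hu⟩ := huniq s₀ (hsubT W hW hs₀)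
        rw [hu W ⟨hW, hs₀⟩, ← hu T ⟨hTP, hsubT W hW hs₀⟩]
      refine ⟨hTP, ?_, hsubT, huniq⟩
      intro V hV
      obtain ⟨e, hde, heD, hVe⟩ := mem_levelsGe.1 (hsub hV)
      rcases eq_or_lt_of_le hde with rfl | hlt
      · obtain ⟨t, ht⟩ := H.nonempty_of_mem_part heD hVe
        exact absurd ((H.block_unique heD hVe hT ht (hsubT V hV ht)) ▸ hV) hTP
      · exact mem_levelsGe.2 ⟨e, hlt, heD, hVe⟩
    -- the forward map lands in the pi set
    have hi : ∀ P ∈ (H.partsOn d T).erase {T},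
        (fun U _ => P.filter (· ⊆ U)) ∈
          (H.siblings d T).pi fun U => H.partsOn (d + 1) U := by
      intro P hP
      rw [Finset.mem_pi]
      intro U hU
      obtain ⟨hTP, hsub, hsubT, huniq⟩ := herase P hP
      rw [mem_partsOn]
      refine ⟨fun V hV => hsub (Finset.mem_filter.1 hV).1,
        fun V hV => (Finset.mem_filter.1 hV).2, ?_⟩
      intro t ht
      have htT : t ∈ T := (mem_siblings.1 hU).2 ht
      obtain ⟨V, ⟨hVP, htV⟩, hu⟩ := huniq t htT
      have hVU : V ⊆ U := by
        obtain ⟨U', hU', hVU'⟩ := hsub_sib (hsub hVP) (hsubT V hVP)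
        have hUU : U' = U := H.block_unique hd1D (mem_siblings.1 hU').1
          (mem_siblings.1 hU).1 (hVU' htV) ht
        exact hUU ▸ hVU'
      exact ⟨V, ⟨Finset.mem_filter.2 ⟨hVP, hVU⟩, htV⟩,
        fun W hW => hu W ⟨(Finset.mem_filter.1 hW.1).1, hW.2⟩⟩
    -- the backward map lands in the erased set
    have hj : ∀ p ∈ (H.siblings d T).pi fun U => H.partsOn (d + 1) U,
        ((H.siblings d T).attach.biUnion fun x => p x.1 x.2) ∈
          (H.partsOn d T).erase {T} := by
      intro p hp
      rw [Finset.mem_pi] at hp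
      rw [Finset.mem_erase]
      constructor
      · intro hcontra
        obtain ⟨t, ht⟩ := hTne
        obtain ⟨U, hU, hUT, htU⟩ := H.sibling_cover d hdD T hT t ht
        have hUs : U ∈ H.siblings d T := mem_siblings.2 ⟨hU, hUT⟩
        obtain ⟨V, ⟨hVQ, htV⟩, -⟩ := (mem_partsOn.1 (hp U hUs)).2.2 t htU
        have hVmem : V ∈ (H.siblings d T).attach.biUnion fun x => p x.1 x.2 :=
          Finset.mem_biUnion.2 ⟨⟨U, hUs⟩, Finset.mem_attach _ _, hVQ⟩
        rw [hcontra, Finset.mem_singleton] at hVmem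
        subst hVmem
        have hTU : V ⊆ U := (mem_partsOn.1 (hp U hUs)).2.1 V hVQ
        have : U = V := subset_antisymm hUT hTU
        exact H.notMem_succ hdD hT (this ▸ hU)
      · rw [mem_partsOn]
        refine ⟨?_, ?_, ?_⟩
        · intro V hV
          obtain ⟨x, -, hVx⟩ := Finset.mem_biUnion.1 hV
          obtain ⟨e, hde, heD, hVe⟩ :=
            mem_levelsGe.1 ((mem_partsOn.1 (hp x.1 x.2)).1 hVx)
          exact mem_levelsGe.2 ⟨e, by omega, heD, hVe⟩
        · intro V hV
          obtain ⟨x, -, hVx⟩ := Finset.mem_biUnion.1 hV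
          exact ((mem_partsOn.1 (hp x.1 x.2)).2.1 V hVx).trans (mem_siblings.1 x.2).2
        · intro t ht
          obtain ⟨U, hU, hUT, htU⟩ := H.sibling_cover d hdD T hT t ht
          have hUs : U ∈ H.siblings d T := mem_siblings.2 ⟨hU, hUT⟩
          obtain ⟨V, ⟨hVQ, htV⟩, hu⟩ := (mem_partsOn.1 (hp U hUs)).2.2 t htU
          refine ⟨V, ⟨Finset.mem_biUnion.2 ⟨⟨U, hUs⟩, Finset.mem_attach _ _, hVQ⟩, htV⟩, ?_⟩
          rintro W ⟨hW, htW⟩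
          obtain ⟨x, -, hWx⟩ := Finset.mem_biUnion.1 hW
          obtain ⟨x, hx⟩ := x
          have hWsubx : W ⊆ x := (mem_partsOn.1 (hp x hx)).2.1 W hWx
          have hxU : x = U := H.block_unique hd1D (mem_siblings.1 hx).1 hU (hWsubx htW) htU
          subst hxU
          exact hu W ⟨hWx, htW⟩
    -- left inverse
    have hleft : ∀ P ∈ (H.partsOn d T).erase {T},
        ((H.siblings d T).attach.biUnion fun x => P.filter (· ⊆ x.1)) = P := by
      intro P hP
      obtain ⟨hTP, hsub, hsubT, huniq⟩ := herase P hP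
      ext V
      constructor
      · intro hV
        obtain ⟨x, -, hVx⟩ := Finset.mem_biUnion.1 hV
        exact (Finset.mem_filter.1 hVx).1
      · intro hV
        obtain ⟨U, hUs, hVU⟩ := hsub_sib (hsub hV) (hsubT V hV)
        exact Finset.mem_biUnion.2 ⟨⟨U, hUs⟩, Finset.mem_attach _ _,
          Finset.mem_filter.2 ⟨hV, hVU⟩⟩
    -- right inverse
    have hright : ∀ p ∈ (H.siblings d T).pi fun U => H.partsOn (d + 1) U,
        (fun U (_ : U ∈ H.siblings d T) =>
          ((H.siblings d T).attach.biUnion fun x => p x.1 x.2).filter (· ⊆ U)) = p := by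
      intro p hp
      rw [Finset.mem_pi] at hp
      funext U hU
      ext V
      rw [Finset.mem_filter]
      constructor
      · rintro ⟨hV, hVU⟩
        obtain ⟨x, -, hVx⟩ := Finset.mem_biUnion.1 hV
        obtain ⟨U', hU'⟩ := x
        have hVne : V.Nonempty :=
          H.nonempty_of_mem_levelsGe ((mem_partsOn.1 (hp U' hU')).1 hVx)
        obtain ⟨t, ht⟩ := hVne
        have hVU' : V ⊆ U' := (mem_partsOn.1 (hp U' hU')).2.1 V hVx
        have hUU : U' = U := H.block_unique hd1D (mem_siblings.1 hU').1
          (mem_siblings.1 hU).1 (hVU' ht) (hVU ht)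
        subst hUU
        exact hVx
      · intro hVp
        exact ⟨Finset.mem_biUnion.2 ⟨⟨U, hU⟩, Finset.mem_attach _ _, hVp⟩,
          (mem_partsOn.1 (hp U hU)).2.1 V hVp⟩
    -- value equality
    have hval : ∀ P ∈ (H.partsOn d T).erase {T},
        H.wOn ε T P * ∏ V ∈ P, k' V
          = ε T * ∏ x ∈ (H.siblings d T).attach,
              (H.wOn ε x.1 (P.filter (· ⊆ x.1)) * ∏ V ∈ P.filter (· ⊆ x.1), k' V) := by
      intro P hP
      obtain ⟨hTP, hsub, hsubT, huniq⟩ := herase P hP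
      have hdisj : ∀ x ∈ (H.siblings d T).attach, ∀ y ∈ (H.siblings d T).attach,
          x ≠ y → Disjoint (P.filter (· ⊆ x.1)) (P.filter (· ⊆ y.1)) := by
        intro x _ y _ hxy
        rw [Finset.disjoint_left]
        intro V hVx hVy
        obtain ⟨t, ht⟩ := H.nonempty_of_mem_levelsGe (hsub (Finset.mem_filter.1 hVx).1)
        exact hxy (Subtype.ext (H.block_unique hd1D (mem_siblings.1 x.2).1
          (mem_siblings.1 y.2).1 ((Finset.mem_filter.1 hVx).2 ht)
          ((Finset.mem_filter.1 hVy).2 ht)))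
      have hPprod : ∀ f : Finset 𝒯 → ℝ, ∏ V ∈ P, f V
          = ∏ x ∈ (H.siblings d T).attach, ∏ V ∈ P.filter (· ⊆ x.1), f V := by
        intro f
        conv_lhs => rw [← hleft P hP]
        exact Finset.prod_biUnion hdisj
      have hancdec : H.ancOn T P = insert T
          ((H.siblings d T).attach.biUnion fun x => H.ancOn x.1 (P.filter (· ⊆ x.1))) := by
        ext W
        rw [mem_ancOn, Finset.mem_insert]
        constructor
        · rintro ⟨hWlev, hWT, V, hVP, hVW⟩
          by_cases hWTeq : W = T
          · exact Or.inl hWTeq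
          right
          obtain ⟨e, heD, hWe⟩ := mem_levels.1 hWlev
          obtain ⟨t, ht⟩ := H.nonempty_of_mem_levelsGe (hsub hVP)
          have htW : t ∈ W := hVW.subset ht
          rcases le_or_gt e d with hed | hde
          · have hTW : T ⊆ W := H.nested hed (by omega) hT hWe (hsubT V hVP ht) htW
            exact absurd (subset_antisymm hWT hTW) hWTeq
          · obtain ⟨U, hUs, hWU⟩ := hsub_sib (mem_levelsGe.2 ⟨e, hde, heD, hWe⟩) hWT
            refine Finset.mem_biUnion.2 ⟨⟨U, hUs⟩, Finset.mem_attach _ _, ?_⟩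
            rw [mem_ancOn]
            exact ⟨hWlev, hWU, V, Finset.mem_filter.2 ⟨hVP, hVW.subset.trans hWU⟩, hVW⟩
        · rintro (rfl | hWb)
          · refine ⟨mem_levels.2 ⟨d, by omega, hT⟩, subset_rfl, ?_⟩
            obtain ⟨t, ht⟩ := hTne
            obtain ⟨V, ⟨hVP, htV⟩, -⟩ := huniq t ht
            exact ⟨V, hVP, ssubset_of_subset_of_ne (hsubT V hVP)
              fun h => hTP (h ▸ hVP)⟩
          · obtain ⟨x, -, hWx⟩ := Finset.mem_biUnion.1 hWb
            rw [mem_ancOn] at hWx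
            obtain ⟨hWlev, hWx1, V, hVf, hVW⟩ := hWx
            exact ⟨hWlev, hWx1.trans (mem_siblings.1 x.2).2, V,
              (Finset.mem_filter.1 hVf).1, hVW⟩
      have hTnotin : T ∉ (H.siblings d T).attach.biUnion
          fun x => H.ancOn x.1 (P.filter (· ⊆ x.1)) := by
        intro h
        obtain ⟨x, -, hTx⟩ := Finset.mem_biUnion.1 h
        exact (H.siblings_ssubset hdD hT x.2).not_subset (mem_ancOn.1 hTx).2.1
      have hancdisj : ∀ x ∈ (H.siblings d T).attach, ∀ y ∈ (H.siblings d T).attach,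
          x ≠ y → Disjoint (H.ancOn x.1 (P.filter (· ⊆ x.1)))
            (H.ancOn y.1 (P.filter (· ⊆ y.1))) := by
        intro x _ y _ hxy
        rw [Finset.disjoint_left]
        intro W hWx hWy
        obtain ⟨-, hWsx, V, hVf, hVW⟩ := mem_ancOn.1 hWx
        obtain ⟨-, hWsy, -⟩ := mem_ancOn.1 hWy
        obtain ⟨t, ht⟩ := H.nonempty_of_mem_levelsGe (hsub (Finset.mem_filter.1 hVf).1)
        have htW : t ∈ W := hVW.subset ht
        exact hxy (Subtype.ext (H.block_unique hd1D (mem_siblings.1 x.2).1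
          (mem_siblings.1 y.2).1 (hWsx htW) (hWsy htW)))
      rw [wOn, hancdec, Finset.prod_insert hTnotin, Finset.prod_biUnion hancdisj,
        hPprod (fun V => 1 - ε V), hPprod k']
      simp only [wOn]
      rw [Finset.prod_mul_distrib, Finset.prod_mul_distrib]
      ring
    -- put everything together
    rw [hK_rec d hdD T hT, ← Finset.add_sum_erase _ _ hTmemP]
    congr 1
    · rw [wOn, ancOn_singleton, Finset.prod_empty, Finset.prod_singleton,
        Finset.prod_singleton, mul_one]
    · have hprod : ∏ U ∈ H.siblings d T, K U
          = ∑ p ∈ (H.siblings d T).pi fun U => H.partsOn (d + 1) U,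
              ∏ x ∈ (H.siblings d T).attach,
                (H.wOn ε x.1 (p x.1 x.2) * ∏ V ∈ p x.1 x.2, k' V) := by
        rw [show ∏ U ∈ H.siblings d T, K U
            = ∏ U ∈ H.siblings d T, ∑ Q ∈ H.partsOn (d + 1) U,
                (H.wOn ε U Q * ∏ V ∈ Q, k' V) from Finset.prod_congr rfl fun U hU =>
                  (ih (d + 1) (by omega) U (mem_siblings.1 hU).1).symm]
        exact Finset.prod_sum _ _ _
      rw [hprod, Finset.mul_sum]
      exact Finset.sum_nbij' (fun P => fun U _ => P.filter (· ⊆ U))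
        (fun p => (H.siblings d T).attach.biUnion fun x => p x.1 x.2)
        hi hj hleft hright hval

end Hierarchy

/-- **Factorization of the multiresolution kernel.**
If `K : P_0^D → ℝ` is defined by downward recursion on the levels of the hierarchy, by
`K_T = k(μ_T, μ'_T)` for `T ∈ P_D` and
`K_T = (1 - ε_T)·k(μ_T, μ'_T) + ε_T·∏_{U ∈ s(T)} K_U` for `T ∈ P_d` with `d < D`,
then `∑_{P ∈ 𝒫_D} π(P) · ∏_{T ∈ P} k(μ_T, μ'_T) = K_𝒯`. -/
theorem multiresolution_factorization
    {𝒯 : Type*} [Fintype 𝒯] [DecidableEq 𝒯] [Nonempty 𝒯] {D : ℕ}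
    (H : Hierarchy 𝒯 D) {M : Type*} [AddCommMonoid M]
    (k : M → M → ℝ) (μ μ' : 𝒯 → M) (ε : Finset 𝒯 → ℝ)
    (hε01 : ∀ T ∈ H.levels, 0 ≤ ε T ∧ ε T ≤ 1)
    (hεD : ∀ T ∈ H.part D, ε T = 0)
    (K : Finset 𝒯 → ℝ)
    (hK_last : ∀ T ∈ H.part D, K T = k (∑ t ∈ T, μ t) (∑ t ∈ T, μ' t))
    (hK_rec : ∀ d < D, ∀ T ∈ H.part d,
      K T = (1 - ε T) * k (∑ t ∈ T, μ t) (∑ t ∈ T, μ' t)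
          + ε T * ∏ U ∈ H.siblings d T, K U) :
    ∑ P ∈ H.parts, H.weight ε P * ∏ T ∈ P, k (∑ t ∈ T, μ t) (∑ t ∈ T, μ' t)
      = K Finset.univ := by
  classical
  have huniv : (Finset.univ : Finset 𝒯) ∈ H.part 0 := by
    rw [H.part_zero]; exact Finset.mem_singleton_self _
  have hparts : H.parts = H.partsOn 0 Finset.univ := by
    ext P
    rw [Hierarchy.mem_partsOn]
    simp only [Hierarchy.parts, Finset.mem_filter, Finset.mem_powerset, IsPartitionOn]
    constructor
    · rintro ⟨hsub, -, huniq⟩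
      refine ⟨?_, fun V _ => Finset.subset_univ V, fun t _ => huniq t⟩
      intro V hV
      obtain ⟨e, heD, hVe⟩ := Hierarchy.mem_levels.1 (hsub hV)
      exact Hierarchy.mem_levelsGe.2 ⟨e, Nat.zero_le e, heD, hVe⟩
    · rintro ⟨hsub, -, huniq⟩
      exact ⟨fun V hV => H.levelsGe_subset_levels 0 (hsub hV),
        fun V hV => H.nonempty_of_mem_levelsGe (hsub hV),
        fun t => huniq t (Finset.mem_univ t)⟩
  have hw : ∀ P, H.weight ε P = H.wOn ε Finset.univ P := by
    intro P
    rw [Hierarchy.weight, Hierarchy.wOn]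
    congr 1
    apply Finset.prod_congr _ fun _ _ => rfl
    ext W
    simp only [Hierarchy.ancestors, Hierarchy.ancOn, Finset.mem_filter,
      Finset.subset_univ, true_and]
  calc ∑ P ∈ H.parts, H.weight ε P * ∏ T ∈ P, k (∑ t ∈ T, μ t) (∑ t ∈ T, μ' t)
      = ∑ P ∈ H.partsOn 0 Finset.univ,
          H.wOn ε Finset.univ P * ∏ T ∈ P, k (∑ t ∈ T, μ t) (∑ t ∈ T, μ' t) := by
        rw [hparts]
        exact Finset.sum_congr rfl fun P _ => by rw [hw]
    _ = K Finset.univ :=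
        H.key ε (fun T => k (∑ t ∈ T, μ t) (∑ t ∈ T, μ' t)) K hεD hK_last hK_rec
          D 0 (Nat.zero_add D) Finset.univ huniv
end

section
/- If k is a positive definite kernel on the commutative additive monoid M, then the multiresolution kernel k_π(μ, μ') := ∑_{P ∈ 𝒫_D} π(P) · ∏_{T ∈ P} k(μ_T, μ'_T) is a positive definite kernel on the set of maps μ : 𝒯 → M. -/
open Finset

section Aux
open Finset Matrix Kronecker

lemma aux_posSemidef_kronecker {n p : Type*} [Fintype n] [Fintype p]
    {A : Matrix n n ℝ} {B : Matrix p p ℝ} (hA : A.PosSemidef) (hB : B.PosSemidef) :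
    (A ⊗ₖ B).PosSemidef := by
  exact hA.kronecker hB

lemma aux_posSemidef_hadamard {n : Type*} [Fintype n]
    {A B : Matrix n n ℝ} (hA : A.PosSemidef) (hB : B.PosSemidef) :
    (Matrix.of fun i j => A i j * B i j).PosSemidef := by
  have h : (Matrix.of fun i j => A i j * B i j)
      = (A ⊗ₖ B).submatrix (fun i => (i, i)) (fun i => (i, i)) := by
    ext i j; simp [Matrix.kronecker_apply]
  rw [h]
  exact (aux_posSemidef_kronecker hA hB).submatrix _

lemma aux_dot_form {m : ℕ} (A : Matrix (Fin m) (Fin m) ℝ) (v : Fin m → ℝ) :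
    dotProduct (star v) (A *ᵥ v) = ∑ i, ∑ j, v i * v j * A i j := by
  simp only [dotProduct, Matrix.mulVec, Pi.star_apply, star_trivial, Finset.mul_sum]
  exact Finset.sum_congr rfl fun i _ => Finset.sum_congr rfl fun j _ => by ring

end Aux

/-- `k` is a positive definite kernel on `X`: it is symmetric and every Gram matrix it
generates is positive semidefinite. -/
def IsPosDefKernel {X : Type*} (k : X → X → ℝ) : Prop :=
  (∀ x y, k x y = k y x) ∧
  ∀ (m : ℕ) (x : Fin m → X) (c : Fin m → ℝ),
    0 ≤ ∑ i, ∑ j, c i * c j * k (x i) (x j)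

/-- **The multiresolution kernel is positive definite:** if `k` is a positive definite
kernel on the commutative additive monoid `M`, then
`k_π(μ, μ') := ∑_{P ∈ 𝒫_D} π(P) · ∏_{T ∈ P} k(μ_T, μ'_T)` is a positive definite kernel
on the set of maps `μ : 𝒯 → M`. -/
theorem isPosDefKernel_multiresolution
    {𝒯 : Type*} [Fintype 𝒯] [DecidableEq 𝒯] [Nonempty 𝒯] {D : ℕ}
    (H : Hierarchy 𝒯 D) {M : Type*} [AddCommMonoid M]
    (ε : Finset 𝒯 → ℝ)
    (hε01 : ∀ T ∈ H.levels, 0 ≤ ε T ∧ ε T ≤ 1)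
    (hεD : ∀ T ∈ H.part D, ε T = 0)
    (k : M → M → ℝ) (hk : IsPosDefKernel k) :
    IsPosDefKernel fun μ μ' : 𝒯 → M =>
      ∑ P ∈ H.parts, H.weight ε P * ∏ T ∈ P, k (∑ t ∈ T, μ t) (∑ t ∈ T, μ' t) := by
  classical
  obtain ⟨hsym, hpsd⟩ := hk
  constructor
  · intro μ μ'
    refine Finset.sum_congr rfl fun P _ => ?_
    congr 1
    exact Finset.prod_congr rfl fun T _ => hsym _ _
  · intro m x c
    -- positive semidefiniteness of the product kernel's Gram matrix
    have hprod : ∀ S : Finset (Finset 𝒯),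
        (Matrix.of fun i j : Fin m =>
          ∏ T ∈ S, k (∑ t ∈ T, x i t) (∑ t ∈ T, x j t)).PosSemidef := by
      intro S
      induction S using Finset.induction_on with
      | empty =>
        refine Matrix.PosSemidef.of_dotProduct_mulVec_nonneg ?_ ?_
        · ext i j
          simp [Matrix.conjTranspose_apply]
        · intro v
          rw [aux_dot_form]
          simp only [Matrix.of_apply, Finset.prod_empty, mul_one]
          calc (0:ℝ) ≤ (∑ i, v i) * (∑ i, v i) := mul_self_nonneg _
            _ = ∑ i, ∑ j, v i * v j := by rw [Finset.sum_mul_sum]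
      | @insert T S hT ih =>
        have hbase : (Matrix.of fun i j : Fin m =>
            k (∑ t ∈ T, x i t) (∑ t ∈ T, x j t)).PosSemidef := by
          refine Matrix.PosSemidef.of_dotProduct_mulVec_nonneg ?_ ?_
          · ext i j
            simp [Matrix.conjTranspose_apply, hsym]
          · intro v
            rw [aux_dot_form]
            simpa using hpsd m (fun i => ∑ t ∈ T, x i t) v
        have hm : (Matrix.of fun i j : Fin m =>
              ∏ T' ∈ insert T S, k (∑ t ∈ T', x i t) (∑ t ∈ T', x j t))
            = Matrix.of fun i j : Fin m =>
              (Matrix.of fun a b : Fin m => k (∑ t ∈ T, x a t) (∑ t ∈ T, x b t)) i j *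
              (Matrix.of fun a b : Fin m =>
                ∏ T' ∈ S, k (∑ t ∈ T', x a t) (∑ t ∈ T', x b t)) i j := by
          ext i j
          simp [Finset.prod_insert hT]
        rw [hm]
        exact aux_posSemidef_hadamard hbase ih
    -- exchange the sums
    have hswap : ∀ f : Fin m → Fin m → Finset (Finset 𝒯) → ℝ,
        ∑ i, ∑ j, ∑ P ∈ H.parts, f i j P = ∑ P ∈ H.parts, ∑ i, ∑ j, f i j P := by
      intro f
      calc ∑ i, ∑ j, ∑ P ∈ H.parts, f i j P
          = ∑ i, ∑ P ∈ H.parts, ∑ j, f i j P :=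
            Finset.sum_congr rfl fun i _ => Finset.sum_comm
        _ = ∑ P ∈ H.parts, ∑ i, ∑ j, f i j P := Finset.sum_comm
    simp only [Finset.mul_sum]
    rw [hswap]
    refine Finset.sum_nonneg fun P hP => ?_
    have hPL : P ⊆ H.levels := by
      simp only [Hierarchy.parts, Finset.mem_filter, Finset.mem_powerset] at hP
      exact hP.1
    have hw : 0 ≤ H.weight ε P := by
      unfold Hierarchy.weight
      refine mul_nonneg (Finset.prod_nonneg fun T hT => ?_)
        (Finset.prod_nonneg fun T hT => ?_)
      · linarith [(hε01 T (hPL hT)).2]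
      · simp only [Hierarchy.ancestors, Finset.mem_filter] at hT
        exact (hε01 T hT.1).1
    have key : ∑ i, ∑ j, c i * c j *
          (H.weight ε P * ∏ T ∈ P, k (∑ t ∈ T, x i t) (∑ t ∈ T, x j t))
        = H.weight ε P *
          ∑ i, ∑ j, c i * c j * ∏ T ∈ P, k (∑ t ∈ T, x i t) (∑ t ∈ T, x j t) := by
      simp only [Finset.mul_sum]
      exact Finset.sum_congr rfl fun i _ => Finset.sum_congr rfl fun j _ => by ring
    rw [key]
    refine mul_nonneg hw ?_
    have hq := (hprod P).dotProduct_mulVec_nonneg c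
    rw [aux_dot_form] at hq
    simpa using hq
end

section
/- Dobinski's formula: for every r ≥ 1, the Bell number B_r equals (1/e) ∑_{u=0}^∞ u^r / u! (equivalently, since the u = 0 term vanishes for r ≥ 1, B_r = (1/e) ∑_{u=1}^∞ u^r / u!). -/
open Finset Filter Topology
namespace DobinskiAux
variable {α β : Type*} [DecidableEq α] [DecidableEq β]




lemma sup_map_eq (ts : Finset (Finset α)) (f : α ↪ β) :
    ts.sup (fun t => t.map f) = (ts.sup id).map f := by
  induction ts using Finset.induction_on with
  | empty => simp
  | insert h s' _ ih => simp [Finset.sup_insert, ih, Finset.map_union]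

/-- Transport a finpartition along an embedding. -/
noncomputable def mapFP (f : α ↪ β) {s : Finset α} (P : Finpartition s) : Finpartition (s.map f) where
  parts := P.parts.image (fun t => t.map f)
  supIndep := by
    rw [Finset.supIndep_iff_pairwiseDisjoint]
    rintro x hx y hy hxy
    simp only [coe_image, Set.mem_image, mem_coe] at hx hy
    obtain ⟨x', hx', rfl⟩ := hx
    obtain ⟨y', hy', rfl⟩ := hy
    have hne : x' ≠ y' := by rintro rfl; exact hxy rfl
    have := P.disjoint hx' hy' hne
    simpa [Function.onFun, Finset.disjoint_map] using this
  sup_parts := by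
    rw [Finset.sup_image]
    rw [show ((id : Finset β → Finset β) ∘ fun t : Finset α => Finset.map f t) = fun t : Finset α => t.map f from rfl]
    rw [sup_map_eq, P.sup_parts]
  bot_notMem := by
    simp only [Finset.bot_eq_empty, mem_image]
    rintro ⟨t, ht, h⟩
    rw [Finset.map_eq_empty] at h
    subst h; exact P.bot_notMem ht

/-- Transport a finpartition back along an embedding. -/
noncomputable def preFP (f : α ↪ β) {s : Finset α} (P : Finpartition (s.map f)) : Finpartition s where
  parts := P.parts.image (fun t => t.preimage f f.injective.injOn)
  supIndep := by
    rw [Finset.supIndep_iff_pairwiseDisjoint]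
    rintro x hx y hy hxy
    simp only [coe_image, Set.mem_image, mem_coe] at hx hy
    obtain ⟨x', hx', rfl⟩ := hx
    obtain ⟨y', hy', rfl⟩ := hy
    have hne : x' ≠ y' := by rintro rfl; exact hxy rfl
    have hd := P.disjoint hx' hy' hne
    rw [Function.onFun, id_eq, id_eq, Finset.disjoint_left] at hd ⊢
    intro a ha ha'
    rw [Finset.mem_preimage] at ha ha'
    exact hd ha ha'
  sup_parts := by
    ext a
    simp only [Finset.mem_sup, mem_image, id_eq]
    constructor
    · rintro ⟨t, ⟨t', ht', rfl⟩, ha⟩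
      rw [Finset.mem_preimage] at ha
      have : f a ∈ s.map f := P.le ht' ha
      rwa [Finset.mem_map' f] at this
    · intro ha
      have : f a ∈ s.map f := Finset.mem_map_of_mem f ha
      rw [← P.sup_parts, Finset.mem_sup] at this
      obtain ⟨t, ht, hft⟩ := this
      exact ⟨t.preimage f f.injective.injOn, ⟨t, ht, rfl⟩, Finset.mem_preimage.2 hft⟩
  bot_notMem := by
    simp only [Finset.bot_eq_empty, mem_image]
    rintro ⟨t, ht, h⟩
    obtain ⟨b, hb⟩ := P.nonempty_of_mem_parts ht
    have hbs : b ∈ s.map f := P.le ht hb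
    obtain ⟨a, _, rfl⟩ := Finset.mem_map.1 hbs
    have : a ∈ t.preimage f f.injective.injOn := Finset.mem_preimage.2 hb
    rw [h] at this
    exact absurd this (Finset.notMem_empty a)

/-- Finpartitions transport along embeddings. -/
noncomputable def embedEquiv (f : α ↪ β) (s : Finset α) : Finpartition s ≃ Finpartition (s.map f) where
  toFun := mapFP f
  invFun := preFP f
  left_inv P := by
    apply Finpartition.ext
    simp only [preFP, mapFP, Finset.image_image]
    have : ∀ t ∈ P.parts, (t.map f).preimage f f.injective.injOn = t := fun t _ =>
      Finset.preimage_map f t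
    calc P.parts.image (fun t => (t.map f).preimage f f.injective.injOn)
        = P.parts.image id := Finset.image_congr (fun t ht => Finset.preimage_map f t)
      _ = P.parts := Finset.image_id
  right_inv P := by
    apply Finpartition.ext
    simp only [preFP, mapFP, Finset.image_image]
    calc P.parts.image (fun t => (t.preimage f f.injective.injOn).map f)
        = P.parts.image id := Finset.image_congr (fun t ht => by
          have hts : t ⊆ s.map f := P.le ht
          ext b
          simp only [Finset.mem_map, Finset.mem_preimage, id_eq]
          constructor
          · rintro ⟨a, ha, rfl⟩; exact ha
          · intro hb
            obtain ⟨a, _, rfl⟩ := Finset.mem_map.1 (hts hb)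
            exact ⟨a, hb, rfl⟩)
      _ = P.parts := Finset.image_id


lemma avoid_parts_erase {s : Finset α} (P : Finpartition s) {T : Finset α} (hT : T ∈ P.parts) :
    (P.avoid T).parts = P.parts.erase T := by
  ext c
  rw [Finpartition.mem_avoid, mem_erase]
  constructor
  · rintro ⟨d, hd, hdT, rfl⟩
    have hdne : d ≠ T := fun h => hdT (h ▸ le_refl T)
    have hdis : Disjoint d T := P.disjoint hd hT hdne
    rw [Finset.sdiff_eq_self_iff_disjoint.2 hdis]
    exact ⟨hdne, hd⟩
  · rintro ⟨hne, hc⟩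
    refine ⟨c, hc, fun hle => hne ?_, ?_⟩
    · obtain ⟨x, hx⟩ := P.nonempty_of_mem_parts hc
      exact P.eq_of_mem_parts hc hT hx (hle hx)
    · have hdis : Disjoint c T := P.disjoint hc hT hne
      exact Finset.sdiff_eq_self_iff_disjoint.2 hdis

lemma sigma_eq {s : Finset α} {t₁ t₂ : Finset α} (h : t₁ = t₂) {ht₁ : t₁ ⊆ s} {ht₂ : t₂ ⊆ s}
    {Q₁ : Finpartition (s \ t₁)} {Q₂ : Finpartition (s \ t₂)}
    (hQ : Q₁.parts = Q₂.parts) :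
    (⟨⟨t₁, ht₁⟩, Q₁⟩ : Σ t : {t : Finset α // t ⊆ s}, Finpartition (s \ t.1))
      = ⟨⟨t₂, ht₂⟩, Q₂⟩ := by
  subst h
  obtain rfl : Q₁ = Q₂ := Finpartition.ext hQ
  rfl

noncomputable def glue (a : α) (s : Finset α) (ha : a ∉ s) (t : Finset α) (ht : t ⊆ s)
    (Q : Finpartition (s \ t)) : Finpartition (insert a s) :=
  Q.extend (b := insert a t)
    (by simp [Finset.bot_eq_empty])
    (by
      rw [Finset.disjoint_left]
      intro y hy hy'
      rw [Finset.mem_sdiff] at hy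
      rcases mem_insert.1 hy' with h | h
      · exact ha (h ▸ hy.1)
      · exact hy.2 h)
    (by
      rw [sup_eq_union]
      ext y
      simp only [mem_union, Finset.mem_sdiff, mem_insert]
      constructor
      · rintro (⟨h1, _⟩ | (h | h))
        · exact Or.inr h1
        · exact Or.inl h
        · exact Or.inr (ht h)
      · rintro (h | h)
        · exact Or.inr (Or.inl h)
        · by_cases hyt : y ∈ t
          · exact Or.inr (Or.inr hyt)
          · exact Or.inl ⟨h, hyt⟩)

lemma glue_parts (a : α) (s : Finset α) (ha : a ∉ s) (t : Finset α) (ht : t ⊆ s)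
    (Q : Finpartition (s \ t)) : (glue a s ha t ht Q).parts = insert (insert a t) Q.parts := rfl

noncomputable def insertEquiv (a : α) (s : Finset α) (ha : a ∉ s) :
    Finpartition (insert a s) ≃ Σ t : {t : Finset α // t ⊆ s}, Finpartition (s \ t.1) where
  toFun P :=
    ⟨⟨(P.part a).erase a, by
        intro x hx
        rw [mem_erase] at hx
        have hxs : x ∈ insert a s := P.le (P.part_mem.2 (mem_insert_self a s)) hx.2
        rcases mem_insert.1 hxs with h | h
        · exact absurd h hx.1
        · exact h⟩,
      (P.avoid (P.part a)).copy (by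
        have haT : a ∈ P.part a := P.mem_part (mem_insert_self a s)
        ext x
        simp only [Finset.mem_sdiff, mem_insert, mem_erase]
        constructor
        · rintro ⟨h1, h2⟩
          have hxa : x ≠ a := fun h => h2 (h ▸ haT)
          exact ⟨h1.resolve_left hxa, fun h => h2 h.2⟩
        · rintro ⟨h1, h2⟩
          have hxa : x ≠ a := fun h => ha (h ▸ h1)
          exact ⟨Or.inr h1, fun h => h2 ⟨hxa, h⟩⟩)⟩
  invFun x := glue a s ha x.1.1 x.1.2 x.2
  left_inv P := by
    apply Finpartition.ext
    have haT : a ∈ P.part a := P.mem_part (mem_insert_self a s)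
    have hTmem : P.part a ∈ P.parts := P.part_mem.2 (mem_insert_self a s)
    show insert (insert a ((P.part a).erase a)) ((P.avoid (P.part a)).parts) = P.parts
    rw [Finset.insert_erase haT, avoid_parts_erase P hTmem, Finset.insert_erase hTmem]
  right_inv := by
    rintro ⟨⟨t, ht⟩, Q⟩
    have hat : a ∉ t := fun h => ha (ht h)
    dsimp only
    have hmem : insert a t ∈ (glue a s ha t ht Q).parts := by
      rw [glue_parts]; exact mem_insert_self _ _
    have hT : (glue a s ha t ht Q).part a = insert a t :=
      (glue a s ha t ht Q).part_eq_of_mem hmem (mem_insert_self a t)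
    have hQmem : insert a t ∉ Q.parts := by
      intro h
      have := Q.le h (mem_insert_self a t)
      rw [Finset.mem_sdiff] at this
      exact ha this.1
    refine sigma_eq ?_ ?_
    · rw [hT, Finset.erase_insert hat]
    · show ((glue a s ha t ht Q).avoid ((glue a s ha t ht Q).part a)).parts = Q.parts
      rw [avoid_parts_erase _ (hT ▸ hmem), hT, glue_parts]
      exact Finset.erase_insert hQmem

noncomputable def bellN (n : ℕ) : ℕ := Nat.card (Finpartition (Finset.univ : Finset (Fin n)))

lemma card_finpartition_eq (s : Finset α) : Nat.card (Finpartition s) = bellN s.card := by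
  classical
  let e := s.equivFin
  let f : Fin s.card ↪ α :=
    ⟨fun i => (e.symm i : α), fun i j h => by
      apply e.symm.injective
      exact Subtype.ext h⟩
  have huniv : (Finset.univ : Finset (Fin s.card)).map f = s := by
    ext x
    simp only [Finset.mem_map, Finset.mem_univ, true_and]
    constructor
    · rintro ⟨i, rfl⟩
      exact (e.symm i).2
    · intro hx
      exact ⟨e ⟨x, hx⟩, by show ((e.symm (e ⟨x, hx⟩) : s) : α) = x; simp⟩
  have := Nat.card_congr (embedEquiv f (Finset.univ : Finset (Fin s.card)))
  rw [huniv] at this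
  exact this.symm

lemma card_insert_eq (a : α) (s : Finset α) (ha : a ∉ s) :
    Nat.card (Finpartition (insert a s)) = ∑ t ∈ s.powerset, Nat.card (Finpartition (s \ t)) := by
  classical
  have e1 := insertEquiv a s ha
  have e2 : (Σ t : {t : Finset α // t ⊆ s}, Finpartition (s \ t.1))
      ≃ Σ t : {t : Finset α // t ∈ s.powerset}, Finpartition (s \ t.1) :=
    (Equiv.subtypeEquivRight (fun t => (Finset.mem_powerset).symm)).sigmaCongrLeft'
  rw [Nat.card_congr (e1.trans e2), Nat.card_eq_fintype_card, Fintype.card_sigma]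
  rw [← Finset.sum_coe_sort s.powerset (fun t => Nat.card (Finpartition (s \ t)))]
  exact Finset.sum_congr rfl fun t _ => (Nat.card_eq_fintype_card).symm

lemma bellN_zero : bellN 0 = 1 := by
  rw [bellN]
  have : (Finset.univ : Finset (Fin 0)) = (⊥ : Finset (Fin 0)) := by simp
  rw [this]
  exact Nat.card_unique

lemma bellN_succ (n : ℕ) : bellN (n + 1) = ∑ k ∈ range (n + 1), n.choose k * bellN k := by
  classical
  set s : Finset (Fin (n+1)) := Finset.univ.erase 0 with hs
  have h0 : (0 : Fin (n+1)) ∉ s := notMem_erase _ _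
  have hins : insert (0 : Fin (n+1)) s = Finset.univ := insert_erase (mem_univ _)
  have hcard : s.card = n := by
    rw [hs, card_erase_of_mem (mem_univ _), Finset.card_univ, Fintype.card_fin, Nat.add_sub_cancel]
  have : bellN (n + 1) = ∑ t ∈ s.powerset, bellN (n - t.card) := by
    rw [bellN, ← hins, card_insert_eq _ _ h0]
    refine Finset.sum_congr rfl fun t ht => ?_
    rw [card_finpartition_eq, card_sdiff_of_subset (Finset.mem_powerset.1 ht), hcard]
  rw [this, Finset.sum_powerset]
  rw [hcard]
  have step : ∀ j ∈ range (n + 1),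
      ∑ t ∈ Finset.powersetCard j s, bellN (n - t.card) = n.choose j * bellN (n - j) := by
    intro j hj
    have : ∀ t ∈ Finset.powersetCard j s, bellN (n - t.card) = bellN (n - j) := by
      intro t ht
      rw [(Finset.mem_powersetCard.1 ht).2]
    rw [Finset.sum_congr rfl this, Finset.sum_const, smul_eq_mul,
      Finset.card_powersetCard, hcard]
  rw [Finset.sum_congr rfl step]
  rw [← Finset.sum_range_reflect (fun j => n.choose j * bellN (n - j)) (n+1)]
  refine Finset.sum_congr rfl fun j hj => ?_
  have hjn : j ≤ n := Nat.lt_succ_iff.1 (Finset.mem_range.1 hj)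
  have h1 : n + 1 - 1 - j = n - j := by omega
  rw [h1, Nat.choose_symm hjn, Nat.sub_sub_self hjn]

lemma summablePow (n : ℕ) : Summable (fun u : ℕ => (u : ℝ) ^ n / u.factorial) := by
  apply summable_of_ratio_test_tendsto_lt_one (l := 0) one_pos
  · filter_upwards [eventually_ge_atTop 1] with u hu
    have h1 : (0:ℝ) < (u:ℝ) := by exact_mod_cast hu
    positivity
  · have hev : ∀ᶠ u : ℕ in atTop,
        (((u:ℝ)+1)/u) ^ n * (1/((u:ℝ)+1))
          = ‖((u+1:ℕ):ℝ) ^ n / (u+1).factorial‖ / ‖(u:ℝ) ^ n / u.factorial‖ := by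
      filter_upwards [eventually_ge_atTop 1] with u hu
      have h1 : (0:ℝ) < (u:ℝ) := by exact_mod_cast hu
      have h2 : (0:ℝ) < (u.factorial : ℝ) := by exact_mod_cast u.factorial_pos
      rw [Real.norm_of_nonneg (by positivity), Real.norm_of_nonneg (by positivity),
        Nat.factorial_succ]
      push_cast
      rw [div_pow]
      field_simp
    have h1 : Tendsto (fun u : ℕ => (((u:ℝ)+1)/u) ^ n * (1/((u:ℝ)+1))) atTop (𝓝 0) := by
      have ha : Tendsto (fun u : ℕ => ((u:ℝ)+1)/u) atTop (𝓝 1) := by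
        have : (fun u : ℕ => ((u:ℝ)+1)/u) =ᶠ[atTop] fun u : ℕ => 1 + 1/(u:ℝ) := by
          filter_upwards [eventually_ge_atTop 1] with u hu
          have h1 : (u:ℝ) ≠ 0 := by
            have : (0:ℝ) < (u:ℝ) := by exact_mod_cast hu
            exact ne_of_gt this
          field_simp
        rw [tendsto_congr' this]
        have := tendsto_one_div_atTop_nhds_zero_nat (𝕜 := ℝ)
        simpa using (tendsto_const_nhds (x := (1:ℝ))).add this
      have hb : Tendsto (fun u : ℕ => 1/((u:ℝ)+1)) atTop (𝓝 0) :=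
        tendsto_one_div_add_atTop_nhds_zero_nat
      have := (ha.pow n).mul hb
      simpa using this
    exact Tendsto.congr' hev h1

noncomputable def F (n : ℕ) : ℝ := ∑' u : ℕ, (u:ℝ) ^ n / u.factorial

lemma F_zero : F 0 = Real.exp 1 := by
  rw [show Real.exp 1 = NormedSpace.exp (1:ℝ) from congrFun Real.exp_eq_exp_ℝ 1,
    NormedSpace.exp_eq_tsum_div]
  simp [F]

lemma F_succ (n : ℕ) : F (n+1) = ∑ k ∈ range (n+1), (n.choose k : ℝ) * F k := by
  rw [F, Summable.tsum_eq_zero_add (summablePow (n+1))]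
  have h0 : ((0:ℕ):ℝ) ^ (n+1) / (Nat.factorial 0 : ℝ) = 0 := by
    simp
  rw [h0, zero_add]
  have key : ∀ u : ℕ, ((u+1:ℕ):ℝ) ^ (n+1) / ((u+1).factorial : ℝ)
      = ∑ k ∈ range (n+1), (n.choose k : ℝ) * ((u:ℝ) ^ k / u.factorial) := by
    intro u
    have h2 : (0:ℝ) < (u.factorial : ℝ) := by exact_mod_cast u.factorial_pos
    have hu1 : (0:ℝ) < (u:ℝ) + 1 := by positivity
    rw [Nat.factorial_succ]
    push_cast
    have h3 : ((u:ℝ) + 1) ^ (n+1) / (((u:ℝ)+1) * u.factorial)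
        = ((u:ℝ) + 1) ^ n / u.factorial := by
      rw [pow_succ]
      field_simp
    rw [h3, add_pow]
    rw [Finset.sum_div]
    refine Finset.sum_congr rfl fun k hk => ?_
    rw [one_pow]
    ring
  rw [tsum_congr key, Summable.tsum_finsetSum (fun k _ => (summablePow k).mul_left _)]
  refine Finset.sum_congr rfl fun k _ => ?_
  rw [tsum_mul_left]
  rfl


lemma F_eq (n : ℕ) : F n = Real.exp 1 * bellN n := by
  induction n using Nat.strong_induction_on with
  | _ n ih =>
    match n with
    | 0 => rw [F_zero, bellN_zero]; simp
    | (m+1) =>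
      rw [F_succ, bellN_succ]
      push_cast
      rw [Finset.mul_sum]
      refine Finset.sum_congr rfl fun k hk => ?_
      have hk' : k < m + 1 := Finset.mem_range.1 hk
      rw [ih k hk']
      ring

end DobinskiAux

/-- The Bell number `B r`: the number of partitions of a set with `r` elements, i.e.
the number of partitions of `Fin r` into nonempty pairwise disjoint blocks covering
`Fin r`. -/
noncomputable def bellNumber (r : ℕ) : ℕ :=
  Nat.card (Finpartition (Finset.univ : Finset (Fin r)))

/-- **Dobinski's formula:** for every `r ≥ 1`, the Bell number `B_r` equals
`(1/e) ∑_{u=0}^∞ u^r / u!`. -/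
theorem dobinski (r : ℕ) (hr : 1 ≤ r) :
    (bellNumber r : ℝ)
      = (1 / Real.exp 1) * ∑' u : ℕ, (u : ℝ) ^ r / (Nat.factorial u) := by
  have h1 : bellNumber r = DobinskiAux.bellN r := rfl
  have h2 := DobinskiAux.F_eq r
  rw [DobinskiAux.F] at h2
  rw [h1, h2]
  field_simp
end
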